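/- arXiv:2504.01225 — 2 statements merged into one kernel-verified Lean document; each statement's English description precedes it below -/
import Mathlib

section
/- Suppose R̂(λ) is a random variable depending on a fixed parameter λ, R(λ) ∈ ℝ, and g(t; R) is a function nondecreasing in t for every R such that P(R̂(λ) ≤ t) ≤ g(t; R(λ)) for all t. Define R̂⁺(λ) = sup{R : g(R̂(λ); R) ≥ δ}. Then P(R(λ) ≤ R̂⁺(λ)) ≥ 1 − δ. -/
open MeasureTheory

lemma aux_union_bound {Ω : Type*} [MeasurableSpace Ω] (μ : Measure Ω)
    (Rhat : Ω → ℝ) (c : ENNReal) (u : ℕ → ℝ) (hu : Monotone u)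
    (hb : ∀ n, μ {ω | Rhat ω ≤ u n} ≤ c) (E : Set Ω)
    (hE : E ⊆ ⋃ n, {ω | Rhat ω ≤ u n}) : μ E ≤ c := by
  calc μ E ≤ μ (⋃ n, {ω | Rhat ω ≤ u n}) := measure_mono hE
    _ = ⨆ n, μ {ω | Rhat ω ≤ u n} := by
        apply Directed.measure_iUnion
        exact Monotone.directed_le (fun m n hmn ω hω => le_trans hω (hu hmn))
    _ ≤ c := iSup_le hb

/-- Proposition 1: conformal risk control upper confidence bound. -/
theorem ucb_coverage {Ω : Type*} [MeasurableSpace Ω]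
    (μ : Measure Ω) [IsProbabilityMeasure μ]
    (Rhat : Ω → ℝ) (hRhat : Measurable Rhat)
    (Rtrue : ℝ) (g : ℝ → ℝ → ℝ) (δ : ℝ) (hδ : δ ∈ Set.Ioo (0 : ℝ) 1)
    (hmono : ∀ R : ℝ, Monotone (fun t => g t R))
    (htail : ∀ t : ℝ, (μ {ω | Rhat ω ≤ t}).toReal ≤ g t Rtrue)
    (hbdd : ∀ ω, BddAbove {R : ℝ | δ ≤ g (Rhat ω) R}) :
    1 - δ ≤ (μ {ω | Rtrue ≤ sSup {R : ℝ | δ ≤ g (Rhat ω) R}}).toReal := by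
  obtain ⟨hδ0, hδ1⟩ := hδ
  set A : Set ℝ := {t | g t Rtrue < δ} with hA
  -- A is downward closed
  have hdown : ∀ ⦃a b : ℝ⦄, a ∈ A → b ≤ a → b ∈ A := by
    intro a b ha hba
    exact lt_of_le_of_lt (hmono Rtrue hba) ha
  set E : Set Ω := {ω | g (Rhat ω) Rtrue < δ} with hEdef
  have hEA : E = Rhat ⁻¹' A := rfl
  have hAmeas : MeasurableSet A := by
    apply Set.OrdConnected.measurableSet
    constructor
    intro x hx y hy z hz
    exact hdown hy hz.2
  have hEmeas : MeasurableSet E := hRhat hAmeas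
  -- measure of a single sublevel set with t ∈ A
  have hsingle : ∀ t ∈ A, μ {ω | Rhat ω ≤ t} ≤ ENNReal.ofReal δ := by
    intro t ht
    have h1 : (μ {ω | Rhat ω ≤ t}).toReal ≤ δ := le_of_lt (lt_of_le_of_lt (htail t) ht)
    calc μ {ω | Rhat ω ≤ t} = ENNReal.ofReal (μ {ω | Rhat ω ≤ t}).toReal :=
          (ENNReal.ofReal_toReal (measure_ne_top μ _)).symm
      _ ≤ ENNReal.ofReal δ := ENNReal.ofReal_le_ofReal h1
  -- main bound: μ E ≤ ofReal δ
  have hEbound : μ E ≤ ENNReal.ofReal δ := by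
    rcases Set.eq_empty_or_nonempty A with hAe | hAne
    · have : E = ∅ := by rw [hEA, hAe]; simp
      simp [this]
    rcases em (BddAbove A) with hAb | hAb
    · -- bounded case
      set s := sSup A with hs
      rcases em (s ∈ A) with hsA | hsA
      · exact aux_union_bound μ Rhat _ (fun (_ : ℕ) => s) monotone_const
          (fun _ => hsingle s hsA) E
          (fun ω hω => Set.mem_iUnion.2 ⟨0, le_csSup hAb hω⟩)
      · have hmem : ∀ n : ℕ, s - 1/(n+1) ∈ A := by
          intro n
          have hlt : s - 1/(n+1) < s := by
            have : (0:ℝ) < 1/(n+1) := by positivity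
            linarith
          obtain ⟨a, haA, hlt2⟩ := exists_lt_of_lt_csSup hAne hlt
          exact hdown haA (le_of_lt hlt2)
        apply aux_union_bound μ Rhat _ (fun n : ℕ => s - 1/(n+1))
        · intro m n hmn
          have : (1:ℝ)/(n+1) ≤ 1/(m+1) := by
            apply one_div_le_one_div_of_le (by positivity)
            have : (m:ℝ) ≤ n := Nat.cast_le.mpr hmn
            linarith
          simp only
          linarith
        · exact fun n => hsingle _ (hmem n)
        · intro ω hω
          have h1 : Rhat ω < s := lt_of_le_of_ne (le_csSup hAb hω) (by
            intro h; exact hsA (h ▸ hω))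
          have h2 : 0 < s - Rhat ω := by linarith
          obtain ⟨n, hn⟩ := exists_nat_one_div_lt h2
          exact Set.mem_iUnion.2 ⟨n, by simp only [Set.mem_setOf_eq]; push_cast; linarith⟩
    · -- unbounded case: every real is in A
      have hall : ∀ t : ℝ, t ∈ A := by
        intro t
        obtain ⟨a, haA, hta⟩ := not_bddAbove_iff.1 hAb t
        exact hdown haA (le_of_lt hta)
      apply aux_union_bound μ Rhat _ (fun n : ℕ => (n:ℝ))
        (fun m n h => Nat.cast_le.mpr h) (fun n => hsingle _ (hall n))
      intro ω hω
      obtain ⟨n, hn⟩ := exists_nat_ge (Rhat ω)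
      exact Set.mem_iUnion.2 ⟨n, hn⟩
  -- complement inclusion
  have hsub : Eᶜ ⊆ {ω | Rtrue ≤ sSup {R : ℝ | δ ≤ g (Rhat ω) R}} := by
    intro ω hω
    have h1 : δ ≤ g (Rhat ω) Rtrue := not_lt.1 hω
    exact le_csSup (hbdd ω) h1
  have hfin : μ {ω | Rtrue ≤ sSup {R : ℝ | δ ≤ g (Rhat ω) R}} ≠ ⊤ := measure_ne_top μ _
  have h2 : (μ Eᶜ).toReal ≤ (μ {ω | Rtrue ≤ sSup {R : ℝ | δ ≤ g (Rhat ω) R}}).toReal :=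
    ENNReal.toReal_mono hfin (measure_mono hsub)
  have h3 : (μ Eᶜ).toReal = 1 - (μ E).toReal := by
    rw [measure_compl hEmeas (measure_ne_top μ _), measure_univ]
    rw [ENNReal.toReal_sub_of_le (prob_le_one) (by simp)]
    simp
  have h4 : (μ E).toReal ≤ δ := by
    calc (μ E).toReal ≤ (ENNReal.ofReal δ).toReal := ENNReal.toReal_mono ENNReal.ofReal_ne_top hEbound
      _ = δ := ENNReal.toReal_ofReal (le_of_lt hδ0)
  linarith
end

section
/- Let X₁,…,Xₙ be i.i.d. random variables in [0,1] with mean R, and R̂ = (1/n)∑Xᵢ. Then for any t, P(R̂ ≤ t) ≤ e · P(Bi(n, R) ≤ ⌈n·t⌉), where Bi(n, R) is a Binomial random variable with n trials and success probability R. -/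
open MeasureTheory Finset ProbabilityTheory

namespace BentkusAux



lemma exp_le_one_add_two_mul {x : ℝ} (hx : 0 ≤ x) (hx2 : x ≤ 1/2) :
    Real.exp x ≤ 1 + 2*x := by
  have h1 : 1 - x ≤ Real.exp (-x) := by
    have := Real.add_one_le_exp (-x); linarith
  have h2 : Real.exp x * (1 - x) ≤ 1 := by
    calc Real.exp x * (1-x) ≤ Real.exp x * Real.exp (-x) := by
          have := (Real.exp_pos x).le
          nlinarith
    _ = 1 := by rw [← Real.exp_add]; simp
  nlinarith [Real.exp_pos x]

lemma exp_sub_one_ge {s : ℝ} (hs : 0 < s) :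
    s * Real.exp (s/2) ≤ Real.exp s - 1 := by
  have hsinh := (Real.self_lt_sinh_iff (x := s/2)).2 (by linarith)
  rw [Real.sinh_eq] at hsinh
  have h1 : s ≤ Real.exp (s/2) - Real.exp (-(s/2)) := by linarith
  have h2 : s * Real.exp (s/2) ≤ (Real.exp (s/2) - Real.exp (-(s/2))) * Real.exp (s/2) := by
    have := (Real.exp_pos (s/2)).le
    nlinarith
  calc s * Real.exp (s/2) ≤ (Real.exp (s/2) - Real.exp (-(s/2))) * Real.exp (s/2) := h2
    _ = Real.exp s - 1 := by
        rw [sub_mul, ← Real.exp_add, ← Real.exp_add]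
        norm_num

lemma exists_pow_le {ρ : ℝ} (hρ : 1 < ρ) :
    ∃ i : ℕ, 1 ≤ i ∧ ρ ^ i ≤ Real.exp 1 * i * (ρ - 1) := by
  have he : (2:ℝ) ≤ Real.exp 1 := by have := Real.add_one_le_exp (1:ℝ); linarith
  by_cases hbig : Real.exp 1 * (ρ - 1) ≥ ρ
  · exact ⟨1, le_refl _, by simpa using hbig⟩
  push_neg at hbig
  -- then ρ < e/(e-1) ≤ 2 ≤ e, so s := log ρ < 1
  have hρ2 : ρ < 2 := by nlinarith
  set s := Real.log ρ with hsdef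
  have hs0 : 0 < s := Real.log_pos hρ
  have hs1 : s < 1 := by
    have : s < Real.log (Real.exp 1) := by
      apply Real.log_lt_log (by linarith)
      calc ρ < 2 := hρ2
        _ ≤ Real.exp 1 := he
    simpa using this
  have hρe : ρ = Real.exp s := (Real.exp_log (by linarith)).symm
  set i : ℕ := ⌈1/s⌉₊ with hidef
  have hil : 1/s ≤ (i:ℝ) := Nat.le_ceil _
  have hiu : (i:ℝ) < 1/s + 1 := Nat.ceil_lt_add_one (by positivity)
  have hi1 : 1 ≤ i := Nat.one_le_ceil_iff.2 (by positivity)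
  refine ⟨i, hi1, ?_⟩
  set u := (i:ℝ) * s with hu
  have hu1 : 1 ≤ u := by
    rw [hu]; rw [div_le_iff₀ hs0] at hil; linarith
  have hu2 : u < 1 + s := by
    rw [hu]
    have h := mul_lt_mul_of_pos_right hiu hs0
    have : (1/s + 1) * s = 1 + s := by field_simp
    linarith [this ▸ h]
  have hpow : ρ ^ i = Real.exp u := by
    rw [hρe, ← Real.exp_nat_mul, hu]
  rw [hpow]
  -- exp u ≤ e * i * (ρ - 1), using ρ - 1 ≥ s * exp(s/2)
  have hkey : Real.exp (u - 1 - s/2) ≤ u := by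
    rcases le_or_gt (u - 1) (s/2) with hc | hc
    · calc Real.exp (u - 1 - s/2) ≤ Real.exp 0 := by
            apply Real.exp_le_exp.2; linarith
      _ = 1 := Real.exp_zero
      _ ≤ u := hu1
    · set v := u - 1 with hv
      have hvs : v < s := by rw [hv]; linarith
      have : u - 1 - s/2 ≤ v/2 := by rw [hv]; linarith
      calc Real.exp (u - 1 - s/2) ≤ Real.exp (v/2) := Real.exp_le_exp.2 this
        _ ≤ 1 + 2*(v/2) := exp_le_one_add_two_mul (by linarith) (by linarith)
        _ = u := by rw [hv]; ring
  have hr1 : s * Real.exp (s/2) ≤ ρ - 1 := by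
    rw [hρe]; exact exp_sub_one_ge hs0
  have hiexp : Real.exp u ≤ u * Real.exp (1 + s/2) := by
    have := mul_le_mul_of_nonneg_right hkey (Real.exp_pos (1 + s/2)).le
    rw [← Real.exp_add] at this
    calc Real.exp u = Real.exp (u - 1 - s/2 + (1 + s/2)) := by ring_nf
      _ ≤ u * Real.exp (1 + s/2) := this
  calc Real.exp u ≤ u * Real.exp (1 + s/2) := hiexp
    _ = Real.exp 1 * (i:ℝ) * (s * Real.exp (s/2)) := by
        rw [Real.exp_add, hu]; ring
    _ ≤ Real.exp 1 * (i:ℝ) * (ρ - 1) := by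
        apply mul_le_mul_of_nonneg_left hr1
        have : (1:ℝ) ≤ (i:ℝ) := by exact_mod_cast hi1
        positivity





section LogConcave

variable (n : ℕ) (p : ℝ)

/-- Binomial pmf. -/
noncomputable def b (k : ℕ) : ℝ := (n.choose k : ℝ) * p^k * (1-p)^(n-k)

/-- Binomial pmf truncated beyond n. -/
noncomputable def bb (k : ℕ) : ℝ := if k ≤ n then b n p k else 0

/-- Binomial CDF. -/
noncomputable def F (j : ℕ) : ℝ := ∑ k ∈ range (j+1), bb n p k

lemma choose_sq (k : ℕ) : n.choose k * n.choose (k+2) ≤ (n.choose (k+1))^2 := by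
  rcases le_or_gt (k+2) n with hkn | hkn
  · have h1 : n.choose (k+1) * (k+1) = n.choose k * (n - k) := Nat.choose_succ_right_eq n k
    have h2 : n.choose (k+2) * (k+2) = n.choose (k+1) * (n - (k+1)) := Nat.choose_succ_right_eq n (k+1)
    have hk1 : k ≤ n := by omega
    have hk2 : k+1 ≤ n := by omega
    have h1' : (n.choose (k+1) : ℤ) * (k+1) = (n.choose k : ℤ) * ((n:ℤ) - k) := by
      zify [hk1] at h1; linarith
    have h2' : (n.choose (k+2) : ℤ) * (k+2) = (n.choose (k+1) : ℤ) * ((n:ℤ) - (k+1)) := by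
      zify [hk2] at h2; linarith
    have hA : (0:ℤ) ≤ (n.choose k : ℤ) := Int.natCast_nonneg _
    have hB : (0:ℤ) ≤ (n.choose (k+1) : ℤ) := Int.natCast_nonneg _
    have hC : (0:ℤ) ≤ (n.choose (k+2) : ℤ) := Int.natCast_nonneg _
    have hbig : (n.choose k : ℤ) * (n.choose (k+2) : ℤ) * (((k:ℤ)+1)*((k:ℤ)+2)*((n:ℤ)-k)) = ((n.choose (k+1) : ℤ))^2 * (((k:ℤ)+1)^2*((n:ℤ)-k-1)) := by
      linear_combination (-((n.choose (k+2) : ℤ)*((k:ℤ)+2)*((k:ℤ)+1)))*h1' + ((n.choose (k+1) : ℤ)*((k:ℤ)+1)^2)*h2'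
    have hn : (k:ℤ) + 2 ≤ (n:ℤ) := by exact_mod_cast hkn
    have hfin : (n.choose k : ℤ) * (n.choose (k+2) : ℤ) ≤ ((n.choose (k+1) : ℤ))^2 := by
      nlinarith [mul_nonneg (mul_nonneg hA hC) (by nlinarith : (0:ℤ) ≤ ((k:ℤ)+1)*((k:ℤ)+2))]
    exact_mod_cast hfin
  · have : n.choose (k+2) = 0 := Nat.choose_eq_zero_of_lt hkn
    simp [this]

lemma b_logconcave (hp0 : 0 ≤ p) (hp1 : p ≤ 1) (k : ℕ) :
    b n p k * b n p (k+2) ≤ (b n p (k+1))^2 := by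
  rcases le_or_gt (k+2) n with hkn | hkn
  · obtain ⟨d, rfl⟩ : ∃ d, n = k+2+d := ⟨n-(k+2), by omega⟩
    have e1 : k+2+d - k = d+2 := by omega
    have e2 : k+2+d - (k+1) = d+1 := by omega
    have e3 : k+2+d - (k+2) = d := by omega
    unfold b
    rw [e1, e2, e3]
    have hc : ((k+2+d).choose k : ℝ) * ((k+2+d).choose (k+2) : ℝ) ≤ ((k+2+d).choose (k+1) : ℝ)^2 := by
      exact_mod_cast choose_sq (k+2+d) k
    have key : ((k+2+d).choose k : ℝ) * p^k * (1-p)^(d+2) * (((k+2+d).choose (k+2) : ℝ) * p^(k+2) * (1-p)^d)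
        = (((k+2+d).choose k : ℝ) * ((k+2+d).choose (k+2) : ℝ)) * (p^(k+1) * (1-p)^(d+1))^2 := by
      ring
    rw [key]
    have key2 : (((k+2+d).choose (k+1) : ℝ) * p^(k+1) * (1-p)^(d+1))^2
        = (((k+2+d).choose (k+1) : ℝ))^2 * (p^(k+1) * (1-p)^(d+1))^2 := by ring
    rw [key2]
    exact mul_le_mul_of_nonneg_right hc (sq_nonneg _)
  · have h0 : b n p (k+2) = 0 := by
      unfold b
      rw [Nat.choose_eq_zero_of_lt hkn]
      simp
    rw [h0, mul_zero]
    exact sq_nonneg _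

lemma bb_nonneg (hp0 : 0 ≤ p) (hp1 : p ≤ 1) (k : ℕ) : 0 ≤ bb n p k := by
  unfold bb b
  split
  · have : (0:ℝ) ≤ 1 - p := by linarith
    positivity
  · exact le_rfl

lemma bb_pos (hp0 : 0 < p) (hp1 : p < 1) {k : ℕ} (hk : k ≤ n) : 0 < bb n p k := by
  unfold bb b
  rw [if_pos hk]
  have h1 : 0 < (n.choose k : ℝ) := by
    exact_mod_cast Nat.choose_pos hk
  have h2 : (0:ℝ) < 1 - p := by linarith
  positivity

lemma bb_logconcave (hp0 : 0 ≤ p) (hp1 : p ≤ 1) (k : ℕ) :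
    bb n p k * bb n p (k+2) ≤ (bb n p (k+1))^2 := by
  rcases le_or_gt (k+2) n with hkn | hkn
  · have h1 : k ≤ n := by omega
    have h2 : k+1 ≤ n := by omega
    unfold bb
    rw [if_pos h1, if_pos h2, if_pos hkn]
    exact b_logconcave n p hp0 hp1 k
  · have : bb n p (k+2) = 0 := by unfold bb; rw [if_neg (by omega)]
    rw [this, mul_zero]
    exact sq_nonneg _

lemma bb_cross (hp0 : 0 < p) (hp1 : p < 1) {a c : ℕ} (hac : a ≤ c) :
    bb n p a * bb n p (c+1) ≤ bb n p (a+1) * bb n p c := by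
  set g : ℕ → ℝ := fun k => if k < n then bb n p (k+1) / bb n p k else 0 with hg
  have hgnonneg : ∀ k, 0 ≤ g k := by
    intro k
    rw [hg]
    dsimp only
    split
    · apply div_nonneg (bb_nonneg n p hp0.le hp1.le _) (bb_nonneg n p hp0.le hp1.le _)
    · exact le_rfl
  have hganti : Antitone g := by
    apply antitone_nat_of_succ_le
    intro k
    rcases lt_or_ge (k+1) n with hk | hk
    · have hkn : k < n := by omega
      rw [hg]
      dsimp only
      rw [if_pos hk, if_pos hkn]
      rw [div_le_div_iff₀ (bb_pos n p hp0 hp1 (by omega)) (bb_pos n p hp0 hp1 (by omega))]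
      calc bb n p (k+1+1) * bb n p k = bb n p k * bb n p (k+2) := by ring
        _ ≤ (bb n p (k+1))^2 := bb_logconcave n p hp0.le hp1.le k
        _ = bb n p (k+1) * bb n p (k+1) := by ring
    · have : g (k+1) = 0 := by rw [hg]; dsimp only; rw [if_neg (by omega)]
      rw [this]
      exact hgnonneg k
  rcases lt_or_ge c n with hcn | hcn
  · have hbc : bb n p (c+1) = g c * bb n p c := by
      rw [hg]; dsimp only; rw [if_pos hcn, div_mul_cancel₀]
      exact (bb_pos n p hp0 hp1 hcn.le).ne'
    have han : a < n := lt_of_le_of_lt hac hcn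
    have hba : bb n p (a+1) = g a * bb n p a := by
      rw [hg]; dsimp only; rw [if_pos han, div_mul_cancel₀]
      exact (bb_pos n p hp0 hp1 han.le).ne'
    rw [hbc, hba]
    have h1 : g c ≤ g a := hganti hac
    have h2 : 0 ≤ bb n p a * bb n p c := mul_nonneg (bb_nonneg n p hp0.le hp1.le _) (bb_nonneg n p hp0.le hp1.le _)
    calc bb n p a * (g c * bb n p c) = g c * (bb n p a * bb n p c) := by ring
      _ ≤ g a * (bb n p a * bb n p c) := mul_le_mul_of_nonneg_right h1 h2
      _ = g a * bb n p a * bb n p c := by ring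
  · have : bb n p (c+1) = 0 := by unfold bb; rw [if_neg (by omega)]
    rw [this, mul_zero]
    exact mul_nonneg (bb_nonneg n p hp0.le hp1.le _) (bb_nonneg n p hp0.le hp1.le _)

lemma F_succ (j : ℕ) : F n p (j+1) = F n p j + bb n p (j+1) := Finset.sum_range_succ _ _

lemma F_nonneg (hp0 : 0 ≤ p) (hp1 : p ≤ 1) (j : ℕ) : 0 ≤ F n p j :=
  Finset.sum_nonneg fun k _ => bb_nonneg n p hp0 hp1 k

lemma F_pos (hp0 : 0 ≤ p) (hp1 : p < 1) (j : ℕ) : 0 < F n p j := by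
  have h0 : 0 < bb n p 0 := by
    unfold bb b
    rw [if_pos (Nat.zero_le n)]
    have h2 : (0:ℝ) < 1 - p := by linarith
    norm_num
    exact pow_pos h2 n
  calc 0 < bb n p 0 := h0
    _ ≤ F n p j := Finset.single_le_sum (f := fun k => bb n p k)
        (fun k _ => bb_nonneg n p hp0 hp1.le k) (Finset.mem_range.2 (by omega))

lemma F_logconcave (hp0 : 0 < p) (hp1 : p < 1) (j : ℕ) :
    F n p j * F n p (j+2) ≤ (F n p (j+1))^2 := by
  have key : F n p j * bb n p (j+2) ≤ F n p (j+1) * bb n p (j+1) := by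
    have step1 : F n p j * bb n p (j+2) = ∑ k ∈ range (j+1), bb n p k * bb n p (j+2) := by
      rw [F, Finset.sum_mul]
    have step2 : ∑ k ∈ range (j+1), bb n p k * bb n p (j+2)
        ≤ ∑ k ∈ range (j+1), bb n p (k+1) * bb n p (j+1) := by
      apply Finset.sum_le_sum
      intro k hk
      have : k ≤ j+1 := by
        have := Finset.mem_range.1 hk; omega
      exact bb_cross n p hp0 hp1 this
    have step3 : ∑ k ∈ range (j+1), bb n p (k+1) * bb n p (j+1)
        = (∑ k ∈ range (j+1), bb n p (k+1)) * bb n p (j+1) := by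
      rw [Finset.sum_mul]
    have step4 : (∑ k ∈ range (j+1), bb n p (k+1)) ≤ F n p (j+1) := by
      have : F n p (j+1) = bb n p 0 + ∑ k ∈ range (j+1), bb n p (k+1) := by
        rw [F, Finset.sum_range_succ']
        ring
      have h0 : 0 ≤ bb n p 0 := bb_nonneg n p hp0.le hp1.le 0
      linarith
    calc F n p j * bb n p (j+2) = ∑ k ∈ range (j+1), bb n p k * bb n p (j+2) := step1
      _ ≤ ∑ k ∈ range (j+1), bb n p (k+1) * bb n p (j+1) := step2
      _ = (∑ k ∈ range (j+1), bb n p (k+1)) * bb n p (j+1) := step3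
      _ ≤ F n p (j+1) * bb n p (j+1) :=
          mul_le_mul_of_nonneg_right step4 (bb_nonneg n p hp0.le hp1.le _)
  have e1 : F n p (j+2) = F n p (j+1) + bb n p (j+2) := F_succ n p (j+1)
  have e2 : F n p (j+1) = F n p j + bb n p (j+1) := F_succ n p j
  have h1 : 0 ≤ F n p j := F_nonneg n p hp0.le hp1.le j
  calc F n p j * F n p (j+2) = F n p j * F n p (j+1) + F n p j * bb n p (j+2) := by rw [e1]; ring
    _ ≤ F n p j * F n p (j+1) + F n p (j+1) * bb n p (j+1) := by linarith [key]
    _ = F n p (j+1) * (F n p j + bb n p (j+1)) := by ring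
    _ = (F n p (j+1))^2 := by rw [← e2]; ring

end LogConcave





lemma max_affine {a c d : ℝ} (ha0 : 0 ≤ a) (ha1 : a ≤ 1) :
    max ((1-a)*c + a*d) 0 ≤ (1-a) * max c 0 + a * max d 0 := by
  apply max_le
  · have h1 : c ≤ max c 0 := le_max_left c 0
    have h2 : d ≤ max d 0 := le_max_left d 0
    nlinarith
  · have h1 : (0:ℝ) ≤ max c 0 := le_max_right c 0
    have h2 : (0:ℝ) ≤ max d 0 := le_max_right d 0
    nlinarith

lemma convex_dominate {Ω : Type*} [MeasurableSpace Ω] (μ : Measure Ω) [IsProbabilityMeasure μ]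
    (n : ℕ) (X : Fin n → Ω → ℝ) (hmeas : ∀ i, Measurable (X i))
    (hindep : ProbabilityTheory.iIndepFun X μ)
    (hbound : ∀ i ω, X i ω ∈ Set.Icc (0:ℝ) 1)
    (R : ℝ) (hR0 : 0 ≤ R) (hR1 : R ≤ 1)
    (hmean : ∀ i, ∫ ω, X i ω ∂μ = R) (h : ℝ) :
    ∫ ω, max (h - ∑ i, X i ω) 0 ∂μ ≤
      ∑ j ∈ range (n+1), (n.choose j : ℝ) * R^j * (1-R)^(n-j) * max (h - j) 0 := by
  classical
  set T : ℕ → Ω → ℝ := fun k ω => ∑ i ∈ univ.filter (fun i : Fin n => k ≤ (i:ℕ)), X i ω with hT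
  set f : ℝ → ℝ := fun x => max (h - x) 0 with hf
  have hTmeas : ∀ k, Measurable (T k) := by
    intro k
    apply Finset.measurable_sum
    intro i _
    exact hmeas i
  have hfm : Measurable f := (measurable_const.sub measurable_id).max measurable_const
  have hT0 : ∀ k ω, 0 ≤ T k ω := fun k ω => Finset.sum_nonneg fun i _ => (hbound i ω).1
  have hTn : ∀ k ω, T k ω ≤ n := by
    intro k ω
    calc T k ω ≤ ∑ _i ∈ univ.filter (fun i : Fin n => k ≤ (i:ℕ)), (1:ℝ) :=
          Finset.sum_le_sum (fun i _ => (hbound i ω).2)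
      _ = ((univ.filter (fun i : Fin n => k ≤ (i:ℕ))).card : ℝ) := by simp
      _ ≤ (n : ℝ) := by
          have h1 : (univ.filter (fun i : Fin n => k ≤ (i:ℕ))).card ≤ n := by
            calc (univ.filter (fun i : Fin n => k ≤ (i:ℕ))).card
                ≤ (univ : Finset (Fin n)).card := Finset.card_filter_le _ _
              _ = n := Finset.card_univ.trans (Fintype.card_fin n)
          exact_mod_cast h1
  have hfnonneg : ∀ x, 0 ≤ f x := fun x => le_max_right _ _
  have hfbound : ∀ (c : ℝ) k ω, ‖f (c + T k ω)‖ ≤ |h| + |c| + n := by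
    intro c k ω
    have h1 := hT0 k ω
    have h2 := hTn k ω
    rw [Real.norm_eq_abs, abs_of_nonneg (hfnonneg _)]
    apply max_le
    · have := le_abs_self h
      have := neg_abs_le c
      linarith
    · have := abs_nonneg h
      have := abs_nonneg c
      have : (0:ℝ) ≤ n := Nat.cast_nonneg n
      linarith [abs_nonneg h, abs_nonneg c]
  have hint : ∀ (c : ℝ) (k : ℕ), Integrable (fun ω => f (c + T k ω)) μ := by
    intro c k
    apply Integrable.mono' (integrable_const (|h| + |c| + n))
    · exact (hfm.comp (measurable_const.add (hTmeas k))).aestronglyMeasurable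
    · exact ae_of_all _ fun ω => hfbound c k ω
  have hXint : ∀ i, Integrable (X i) μ := by
    intro i
    apply Integrable.mono' (integrable_const 1)
    · exact (hmeas i).aestronglyMeasurable
    · apply ae_of_all
      intro ω
      rw [Real.norm_eq_abs, abs_of_nonneg (hbound i ω).1]
      exact (hbound i ω).2
  -- the one-coordinate replacement step
  have hstep : ∀ (c : ℝ) (k : ℕ), k < n →
      ∫ ω, f (c + T k ω) ∂μ ≤
        (1-R) * ∫ ω, f (c + T (k+1) ω) ∂μ + R * ∫ ω, f (c + 1 + T (k+1) ω) ∂μ := by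
    intro c k hkn
    set i₀ : Fin n := ⟨k, hkn⟩ with hi₀
    have hsplit : ∀ ω, T k ω = X i₀ ω + T (k+1) ω := by
      intro ω
      have hins : univ.filter (fun i : Fin n => k ≤ (i:ℕ))
          = insert i₀ (univ.filter (fun i : Fin n => k+1 ≤ (i:ℕ))) := by
        ext i
        simp only [Finset.mem_filter, Finset.mem_univ, true_and, Finset.mem_insert]
        constructor
        · intro hi
          rcases eq_or_lt_of_le hi with he | hl
          · left
            apply Fin.ext
            simp [hi₀, he.symm]
          · right; omega
        · rintro (rfl | hi)
          · exact le_refl k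
          · omega
      have hnm : i₀ ∉ univ.filter (fun i : Fin n => k+1 ≤ (i:ℕ)) := by
        simp [hi₀]
      simp only [hT]
      rw [hins, Finset.sum_insert hnm]
    have hpt : ∀ ω, f (c + T k ω) ≤
        (1 - X i₀ ω) * f (c + T (k+1) ω) + X i₀ ω * f (c + 1 + T (k+1) ω) := by
      intro ω
      rw [hsplit ω]
      have ha0 := (hbound i₀ ω).1
      have ha1 := (hbound i₀ ω).2
      have e : h - (c + (X i₀ ω + T (k+1) ω))
          = (1 - X i₀ ω)*(h - (c + T (k+1) ω)) + X i₀ ω*(h - (c + 1 + T (k+1) ω)) := by ring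
      show max (h - (c + (X i₀ ω + T (k+1) ω))) 0 ≤ _
      rw [e]
      exact max_affine ha0 ha1
    -- integrability of the pieces
    have hg1 : Integrable (fun ω => (1 - X i₀ ω) * f (c + T (k+1) ω)) μ := by
      apply Integrable.bdd_mul (c := 1) (hint c (k+1))
        ((measurable_const.sub (hmeas i₀)).aestronglyMeasurable)
      refine ae_of_all _ fun ω => ?_
      simp only [Pi.sub_apply]
      rw [Real.norm_eq_abs, abs_le]
      constructor <;> [linarith [(hbound i₀ ω).2]; linarith [(hbound i₀ ω).1]]
    have hg2 : Integrable (fun ω => X i₀ ω * f (c + 1 + T (k+1) ω)) μ := by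
      apply Integrable.bdd_mul (c := 1) (hint (c+1) (k+1) |>.congr ?_) ((hmeas i₀).aestronglyMeasurable) ?_
      · apply ae_of_all; intro ω; ring_nf
      · refine ae_of_all _ fun ω => ?_
        rw [Real.norm_eq_abs, abs_le]
        constructor <;> [linarith [(hbound i₀ ω).1]; exact (hbound i₀ ω).2]
    have hg2' : Integrable (fun ω => X i₀ ω * f (c + T (k+1) ω)) μ := by
      apply Integrable.bdd_mul (c := 1) (hint c (k+1)) ((hmeas i₀).aestronglyMeasurable)
      refine ae_of_all _ fun ω => ?_
      rw [Real.norm_eq_abs, abs_le]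
      constructor <;> [linarith [(hbound i₀ ω).1]; exact (hbound i₀ ω).2]
    -- independence
    have hindepT : IndepFun (X i₀) (T (k+1)) μ := by
      have hni : i₀ ∉ univ.filter (fun i : Fin n => k+1 ≤ (i:ℕ)) := by simp [hi₀]
      have h1 := hindep.indepFun_finsetSum_of_notMem hmeas hni
      have heq : T (k+1) = ∑ j ∈ univ.filter (fun i : Fin n => k+1 ≤ (i:ℕ)), X j := by
        funext ω
        simp only [hT, Finset.sum_apply]
      rw [heq]
      exact h1.symm
    have hindep2 : ∀ c' : ℝ, IndepFun (X i₀) (fun ω => f (c' + T (k+1) ω)) μ := by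
      intro c'
      have : (fun ω => f (c' + T (k+1) ω)) = (fun y => f (c' + y)) ∘ (T (k+1)) := rfl
      rw [this]
      exact IndepFun.comp (φ := (id : ℝ → ℝ)) (ψ := fun y => f (c' + y)) hindepT
        measurable_id (hfm.comp (measurable_const.add measurable_id))
    have hmul : ∀ c' : ℝ, ∫ ω, X i₀ ω * f (c' + T (k+1) ω) ∂μ = R * ∫ ω, f (c' + T (k+1) ω) ∂μ := by
      intro c'
      have hi : Integrable (fun ω => f (c' + T (k+1) ω)) μ := hint c' (k+1)
      have hmm := (hindep2 c').integral_mul_eq_mul_integral (hXint i₀).aestronglyMeasurable hi.aestronglyMeasurable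
      calc ∫ ω, X i₀ ω * f (c' + T (k+1) ω) ∂μ
          = integral μ (X i₀ * fun ω => f (c' + T (k+1) ω)) := rfl
        _ = (∫ ω, X i₀ ω ∂μ) * ∫ ω, f (c' + T (k+1) ω) ∂μ := hmm
        _ = R * ∫ ω, f (c' + T (k+1) ω) ∂μ := by rw [hmean i₀]
    have hrhs : ∫ ω, ((1 - X i₀ ω) * f (c + T (k+1) ω) + X i₀ ω * f (c + 1 + T (k+1) ω)) ∂μ
        = (1-R) * ∫ ω, f (c + T (k+1) ω) ∂μ + R * ∫ ω, f (c + 1 + T (k+1) ω) ∂μ := by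
      rw [integral_add hg1 hg2]
      have e1 : ∫ ω, (1 - X i₀ ω) * f (c + T (k+1) ω) ∂μ
          = ∫ ω, f (c + T (k+1) ω) ∂μ - ∫ ω, X i₀ ω * f (c + T (k+1) ω) ∂μ := by
        rw [← integral_sub (hint c (k+1)) hg2']
        congr 1
        funext ω
        ring
      rw [e1, hmul c]
      have e2 : ∫ ω, X i₀ ω * f (c + 1 + T (k+1) ω) ∂μ = R * ∫ ω, f (c + 1 + T (k+1) ω) ∂μ :=
        hmul (c+1)
      rw [e2]
      ring
    calc ∫ ω, f (c + T k ω) ∂μ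
        ≤ ∫ ω, ((1 - X i₀ ω) * f (c + T (k+1) ω) + X i₀ ω * f (c + 1 + T (k+1) ω)) ∂μ :=
          integral_mono (hint c k) (hg1.add hg2) hpt
      _ = _ := hrhs
  -- weights
  set w : ℕ → ℕ → ℝ := fun k j => (k.choose j : ℝ) * R^j * (1-R)^(k-j) with hw
  have hwnn : ∀ k j, 0 ≤ w k j := by
    intro k j
    have : (0:ℝ) ≤ 1 - R := by linarith
    simp only [hw]
    positivity
  have hwzero : ∀ k j, k < j → w k j = 0 := by
    intro k j hkj
    simp only [hw]
    rw [Nat.choose_eq_zero_of_lt hkj]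
    simp
  have wpascal : ∀ k j, w (k+1) (j+1) = R * w k j + (1-R) * w k (j+1) := by
    intro k j
    rcases lt_trichotomy j k with hjk | rfl | hjk
    · simp only [hw]
      rw [Nat.choose_succ_succ]
      have e1 : k + 1 - (j+1) = k - j := by omega
      have e2 : k - j = (k - (j+1)) + 1 := by omega
      rw [e1, e2, pow_succ]
      push_cast
      ring
    · simp only [hw]
      rw [Nat.choose_succ_succ, Nat.choose_self, Nat.choose_succ_self]
      have e1 : j + 1 - (j+1) = 0 := by omega
      have e2 : j - j = 0 := by omega
      rw [e1, e2]
      push_cast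
      ring
    · have h1 : w (k+1) (j+1) = 0 := hwzero _ _ (by omega)
      have h2 : w k j = 0 := hwzero _ _ (by omega)
      have h3 : w k (j+1) = 0 := hwzero _ _ (by omega)
      rw [h1, h2, h3]
      ring
  -- main induction
  have hmain : ∀ k, k ≤ n →
      ∫ ω, f (T 0 ω) ∂μ ≤ ∑ j ∈ range (k+1), w k j * ∫ ω, f ((j:ℝ) + T k ω) ∂μ := by
    intro k
    induction k with
    | zero =>
      intro _
      have : w 0 0 = 1 := by simp [hw]
      rw [Finset.sum_range_one, this]
      simp
    | succ k ih =>
      intro hk1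
      have hkn : k < n := by omega
      have step1 : ∫ ω, f (T 0 ω) ∂μ ≤ ∑ j ∈ range (k+1), w k j * ∫ ω, f ((j:ℝ) + T k ω) ∂μ :=
        ih (by omega)
      set J : ℕ → ℝ := fun j => ∫ ω, f ((j:ℝ) + T (k+1) ω) ∂μ with hJ
      have step2 : ∑ j ∈ range (k+1), w k j * ∫ ω, f ((j:ℝ) + T k ω) ∂μ
          ≤ ∑ j ∈ range (k+1), w k j * ((1-R) * J j + R * J (j+1)) := by
        apply Finset.sum_le_sum
        intro j _
        apply mul_le_mul_of_nonneg_left _ (hwnn k j)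
        have hs := hstep (j:ℝ) k hkn
        have e : ((j:ℝ) + 1) = ((j+1 : ℕ) : ℝ) := by push_cast; ring
        simp only [hJ]
        rw [← e]
        exact hs
      have step3 : ∑ j ∈ range (k+1), w k j * ((1-R) * J j + R * J (j+1))
          = ∑ j ∈ range (k+2), w (k+1) j * J j := by
        have lhs_split : ∑ j ∈ range (k+1), w k j * ((1-R) * J j + R * J (j+1))
            = (∑ j ∈ range (k+1), (1-R) * w k j * J j)
              + ∑ j ∈ range (k+1), R * w k j * J (j+1) := by
          rw [← Finset.sum_add_distrib]
          apply Finset.sum_congr rfl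
          intro j _
          ring
        have rhs_split : ∑ j ∈ range (k+2), w (k+1) j * J j
            = (∑ j ∈ range (k+1), w (k+1) (j+1) * J (j+1)) + w (k+1) 0 * J 0 := by
          rw [Finset.sum_range_succ']
        have first_split : ∑ j ∈ range (k+1), (1-R) * w k j * J j
            = (∑ j ∈ range k, (1-R) * w k (j+1) * J (j+1)) + (1-R) * w k 0 * J 0 := by
          rw [Finset.sum_range_succ']
        have ext_sum : ∑ j ∈ range (k+1), (1-R) * w k (j+1) * J (j+1)
            = ∑ j ∈ range k, (1-R) * w k (j+1) * J (j+1) := by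
          rw [Finset.sum_range_succ]
          rw [hwzero k (k+1) (by omega)]
          ring
        have w0 : w (k+1) 0 = (1-R) * w k 0 := by
          simp only [hw]
          simp [pow_succ]
          ring
        rw [lhs_split, rhs_split]
        have : ∑ j ∈ range (k+1), w (k+1) (j+1) * J (j+1)
            = ∑ j ∈ range (k+1), (R * w k j * J (j+1) + (1-R) * w k (j+1) * J (j+1)) := by
          apply Finset.sum_congr rfl
          intro j _
          rw [wpascal k j]
          ring
        rw [this, Finset.sum_add_distrib, ext_sum, w0, first_split]
        ring
      calc ∫ ω, f (T 0 ω) ∂μ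
          ≤ ∑ j ∈ range (k+1), w k j * ∫ ω, f ((j:ℝ) + T k ω) ∂μ := step1
        _ ≤ ∑ j ∈ range (k+1), w k j * ((1-R) * J j + R * J (j+1)) := step2
        _ = ∑ j ∈ range (k+2), w (k+1) j * J j := step3
  -- evaluate at k = n
  have hTzero : ∀ ω, T 0 ω = ∑ i, X i ω := by
    intro ω
    simp only [hT]
    congr 1
    apply Finset.filter_true_of_mem
    intro i _
    exact Nat.zero_le _
  have hTnn : ∀ ω, T n ω = 0 := by
    intro ω
    simp only [hT]
    rw [Finset.filter_false_of_mem, Finset.sum_empty]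
    intro i _
    simp only [not_le]
    exact i.isLt
  have hfinal := hmain n (le_refl n)
  have e1 : ∫ ω, f (T 0 ω) ∂μ = ∫ ω, max (h - ∑ i, X i ω) 0 ∂μ := by
    apply integral_congr_ae
    apply ae_of_all
    intro ω
    show f (T 0 ω) = max (h - ∑ i, X i ω) 0
    rw [hTzero ω]
  have e2 : ∀ j : ℕ, ∫ ω, f ((j:ℝ) + T n ω) ∂μ = max (h - j) 0 := by
    intro j
    have : (fun ω => f ((j:ℝ) + T n ω)) = fun _ => max (h - j) 0 := by
      funext ω
      rw [hTnn ω]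
      simp [hf]
    rw [this, integral_const]
    simp
  rw [e1] at hfinal
  calc ∫ ω, max (h - ∑ i, X i ω) 0 ∂μ
      ≤ ∑ j ∈ range (n+1), w n j * ∫ ω, f ((j:ℝ) + T n ω) ∂μ := hfinal
    _ = ∑ j ∈ range (n+1), (n.choose j : ℝ) * R^j * (1-R)^(n-j) * max (h - j) 0 := by
        apply Finset.sum_congr rfl
        intro j _
        rw [e2 j]


end BentkusAux

open BentkusAux


/-- Bentkus' inequality for the lower tail of a bounded empirical mean. -/
theorem bentkus_lower_tail {Ω : Type*} [MeasurableSpace Ω]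
    (μ : Measure Ω) [IsProbabilityMeasure μ] (n : ℕ) (hn : 0 < n)
    (X : Fin n → Ω → ℝ) (hmeas : ∀ i, Measurable (X i))
    (hindep : ProbabilityTheory.iIndepFun X μ)
    (hident : ∀ i j, μ.map (X i) = μ.map (X j))
    (hbound : ∀ i ω, X i ω ∈ Set.Icc (0 : ℝ) 1)
    (R : ℝ) (hR : R ∈ Set.Icc (0 : ℝ) 1) (hmean : ∀ i, ∫ ω, X i ω ∂μ = R)
    (t : ℝ) :
    (μ {ω | (∑ i, X i ω) / n ≤ t}).toReal ≤
      Real.exp 1 *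
        ∑ k ∈ Finset.range (n + 1),
          (if (k : ℤ) ≤ ⌈(n : ℝ) * t⌉ then (n.choose k : ℝ) * R ^ k * (1 - R) ^ (n - k) else 0) := by
  classical
  obtain ⟨hR0, hR1⟩ := hR
  have he1 : (1:ℝ) ≤ Real.exp 1 := by
    have := Real.add_one_le_exp (1:ℝ); linarith
  have hn0 : (0:ℝ) < n := by exact_mod_cast hn
  have h1R : (0:ℝ) ≤ 1 - R := by linarith
  have hbnn : ∀ k : ℕ, 0 ≤ (n.choose k : ℝ) * R^k * (1-R)^(n-k) := by
    intro k; positivity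
  have hRHSnn : 0 ≤ ∑ k ∈ range (n+1),
      (if (k:ℤ) ≤ ⌈(n:ℝ)*t⌉ then (n.choose k : ℝ) * R^k * (1-R)^(n-k) else 0) := by
    apply Finset.sum_nonneg
    intro k _
    split
    · exact hbnn k
    · exact le_rfl
  have hLHS1 : (μ {ω | (∑ i, X i ω)/n ≤ t}).toReal ≤ 1 := by
    calc (μ {ω | (∑ i, X i ω)/n ≤ t}).toReal
        ≤ (μ Set.univ).toReal :=
          ENNReal.toReal_mono (measure_ne_top μ _) (measure_mono (Set.subset_univ _))
      _ = 1 := by simp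
  have hLHSnn : 0 ≤ (μ {ω | (∑ i, X i ω)/n ≤ t}).toReal := ENNReal.toReal_nonneg
  by_cases hqneg : ⌈(n:ℝ)*t⌉ < 0
  · -- lower-tail set is empty
    have hset : {ω | (∑ i, X i ω)/n ≤ t} = ∅ := by
      ext ω
      simp only [Set.mem_setOf_eq, Set.mem_empty_iff_false, iff_false, not_le]
      have hc : (⌈(n:ℝ)*t⌉ : ℝ) < 0 := by exact_mod_cast hqneg
      have hnt : (n:ℝ)*t < 0 := by linarith [Int.le_ceil ((n:ℝ)*t)]
      have ht : t < 0 := by nlinarith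
      have hsum : 0 ≤ ∑ i, X i ω := Finset.sum_nonneg fun i _ => (hbound i ω).1
      calc t < 0 := ht
        _ ≤ (∑ i, X i ω)/n := div_nonneg hsum hn0.le
    rw [hset]
    simp only [measure_empty, ENNReal.toReal_zero]
    exact mul_nonneg (Real.exp_pos 1).le hRHSnn
  push_neg at hqneg
  by_cases hqn : (n:ℤ) ≤ ⌈(n:ℝ)*t⌉
  · -- RHS equals e
    have hsum1 : ∑ k ∈ range (n+1),
        (if (k:ℤ) ≤ ⌈(n:ℝ)*t⌉ then (n.choose k:ℝ)*R^k*(1-R)^(n-k) else 0)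
        = ∑ k ∈ range (n+1), (n.choose k:ℝ)*R^k*(1-R)^(n-k) := by
      apply Finset.sum_congr rfl
      intro k hk
      rw [if_pos]
      have hk' : k ≤ n := by
        have := Finset.mem_range.mp hk; omega
      calc (k:ℤ) ≤ (n:ℤ) := by exact_mod_cast hk'
        _ ≤ ⌈(n:ℝ)*t⌉ := hqn
    have hbinom : ∑ k ∈ range (n+1), (n.choose k:ℝ)*R^k*(1-R)^(n-k) = 1 := by
      calc ∑ k ∈ range (n+1), (n.choose k:ℝ)*R^k*(1-R)^(n-k)
          = ∑ k ∈ range (n+1), R^k*(1-R)^(n-k)*(n.choose k:ℝ) := by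
            apply Finset.sum_congr rfl
            intro k _
            ring
        _ = (R + (1-R))^n := (add_pow R (1-R) n).symm
        _ = 1 := by norm_num
    rw [hsum1, hbinom, mul_one]
    exact le_trans hLHS1 he1
  push_neg at hqn
  -- the interesting range: 0 ≤ ⌈nt⌉ < n
  set q : ℤ := ⌈(n:ℝ)*t⌉ with hq
  set m : ℕ := q.toNat with hm
  have hmq : (m:ℤ) = q := Int.toNat_of_nonneg hqneg
  have hmn : m < n := by omega
  have hnt_le_m : (n:ℝ)*t ≤ m := by
    have h1 : (n:ℝ)*t ≤ (q:ℝ) := Int.le_ceil _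
    have h2 : ((m:ℤ):ℝ) = (q:ℝ) := by exact_mod_cast hmq
    push_cast at h2
    linarith
  have hgoalsum : ∑ k ∈ range (n+1),
      (if (k:ℤ) ≤ q then (n.choose k:ℝ)*R^k*(1-R)^(n-k) else 0) = F n R m := by
    have hfilter : (range (n+1)).filter (fun k => k ≤ m) = range (m+1) := by
      ext k
      simp only [Finset.mem_filter, Finset.mem_range]
      omega
    calc ∑ k ∈ range (n+1), (if (k:ℤ) ≤ q then (n.choose k:ℝ)*R^k*(1-R)^(n-k) else 0)
        = ∑ k ∈ range (n+1), (if k ≤ m then b n R k else 0) := by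
          apply Finset.sum_congr rfl
          intro k _
          by_cases hkm : k ≤ m
          · rw [if_pos hkm, if_pos (show (k:ℤ) ≤ q by omega)]
            rfl
          · rw [if_neg hkm, if_neg (show ¬ ((k:ℤ) ≤ q) by omega)]
      _ = ∑ k ∈ (range (n+1)).filter (fun k => k ≤ m), b n R k := (Finset.sum_filter _ _).symm
      _ = ∑ k ∈ range (m+1), b n R k := by rw [hfilter]
      _ = ∑ k ∈ range (m+1), bb n R k := by
          apply Finset.sum_congr rfl
          intro k hk
          have hk' : k ≤ n := by
            have := Finset.mem_range.mp hk; omega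
          rw [bb, if_pos hk']
      _ = F n R m := rfl
  rw [hgoalsum]
  -- integrability of the X i
  have hXint : ∀ i, Integrable (X i) μ := by
    intro i
    apply Integrable.mono' (integrable_const 1)
    · exact (hmeas i).aestronglyMeasurable
    · apply ae_of_all
      intro ω
      rw [Real.norm_eq_abs, abs_of_nonneg (hbound i ω).1]
      exact (hbound i ω).2
  rcases eq_or_lt_of_le hR0 with hR0' | hR0'
  · -- R = 0
    have hF1 : 1 ≤ F n R m := by
      have hb0 : bb n R 0 = 1 := by
        rw [bb, if_pos (Nat.zero_le n), b, ← hR0']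
        norm_num
    -- F n R m ≥ bb n R 0 = 1
      calc (1:ℝ) = bb n R 0 := hb0.symm
        _ ≤ F n R m := Finset.single_le_sum (f := fun k => bb n R k)
            (fun k _ => bb_nonneg n R hR0 hR1 k) (Finset.mem_range.mpr (by omega))
    calc (μ {ω | (∑ i, X i ω)/n ≤ t}).toReal ≤ 1 := hLHS1
      _ ≤ Real.exp 1 * F n R m := by
          have := mul_le_mul he1 hF1 zero_le_one (le_trans zero_le_one he1)
          linarith
  rcases eq_or_lt_of_le hR1 with hR1' | hR1'
  · -- R = 1 : lower tail has probability zero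
    have hXae : ∀ i : Fin n, ∀ᵐ ω ∂μ, X i ω = 1 := by
      intro i
      have hnn : 0 ≤ᵐ[μ] (fun ω => 1 - X i ω) := ae_of_all _ fun ω => by
        simp only [Pi.zero_apply]
        linarith [(hbound i ω).2]
      have hint1 : Integrable (fun ω => 1 - X i ω) μ := (integrable_const 1).sub (hXint i)
      have hz : ∫ ω, (1 - X i ω) ∂μ = 0 := by
        rw [integral_sub (integrable_const 1) (hXint i), hmean i, integral_const]
        simp [hR1']
      have := (integral_eq_zero_iff_of_nonneg_ae hnn hint1).mp hz
      filter_upwards [this] with ω hω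
      have : 1 - X i ω = 0 := hω
      linarith
    have hae : ∀ᵐ ω ∂μ, ∀ i, X i ω = 1 := (MeasureTheory.ae_all_iff).mpr hXae
    have ht1 : t < 1 := by
      have : (m:ℝ) < n := by exact_mod_cast hmn
      nlinarith
    have hzero : μ {ω | (∑ i, X i ω)/n ≤ t} = 0 := by
      rw [measure_eq_zero_iff_ae_notMem]
      filter_upwards [hae] with ω hω
      simp only [Set.mem_setOf_eq, not_le]
      have hsum : ∑ i, X i ω = n := by
        rw [Finset.sum_congr rfl (fun i _ => hω i)]
        simp
      rw [hsum, div_self hn0.ne']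
      exact ht1
    rw [hzero]
    simp only [ENNReal.toReal_zero]
    exact mul_nonneg (Real.exp_pos 1).le (F_nonneg n R hR0 hR1 m)
  -- main case : 0 < R < 1
  have hFpos : ∀ j, 0 < F n R j := F_pos n R hR0 hR1'
  set ρ : ℝ := F n R (m+1) / F n R m with hρ
  have hρ1 : 1 < ρ := by
    rw [hρ]
    rw [lt_div_iff₀ (hFpos m)]
    rw [F_succ, one_mul]
    have := bb_pos n R hR0' hR1' (k := m+1) (by omega)
    linarith
  have hρ0 : (0:ℝ) < ρ := lt_trans one_pos hρ1
  obtain ⟨i, hi1, hie⟩ := exists_pow_le hρ1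
  have hi0 : (0:ℝ) < i := by exact_mod_cast hi1
  -- CDF ratio is antitone
  set g : ℕ → ℝ := fun j => F n R (j+1) / F n R j with hg
  have hganti : Antitone g := by
    apply antitone_nat_of_succ_le
    intro j
    rw [hg]
    dsimp only
    rw [div_le_div_iff₀ (hFpos (j+1)) (hFpos j)]
    have := F_logconcave n R hR0' hR1' j
    nlinarith
  have hgm : g m = ρ := rfl
  have hFup : ∀ l, F n R (m+l) ≤ F n R m * ρ^l := by
    intro l
    induction l with
    | zero => simp
    | succ l ih =>
      have h1 : g (m+l) * F n R (m+l) = F n R (m+l+1) :=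
        div_mul_cancel₀ _ (hFpos (m+l)).ne'
      have h2 : g (m+l) ≤ ρ := by
        rw [← hgm]
        exact hganti (Nat.le_add_right m l)
      have h3 : m + (l+1) = (m+l) + 1 := rfl
      calc F n R (m+(l+1)) = g (m+l) * F n R (m+l) := by rw [h3, ← h1]
        _ ≤ ρ * (F n R m * ρ^l) := by
            apply mul_le_mul h2 ih (F_nonneg n R hR0 hR1 _)
            linarith
        _ = F n R m * ρ^(l+1) := by ring
  have hFdown : ∀ d, d ≤ m → F n R (m-d) * ρ^d ≤ F n R m := by
    intro d
    induction d with
    | zero => intro _; simp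
    | succ d ih =>
      intro hd
      have hd' : d ≤ m := by omega
      have hkey : F n R (m-(d+1)) * ρ ≤ F n R (m-d) := by
        have h1 : ρ ≤ g (m-(d+1)) := by
          rw [← hgm]
          exact hganti (by omega : m-(d+1) ≤ m)
        have h2 : g (m-(d+1)) * F n R (m-(d+1)) = F n R (m-(d+1)+1) :=
          div_mul_cancel₀ _ (hFpos (m-(d+1))).ne'
        have h3 : m-(d+1)+1 = m-d := by omega
        calc F n R (m-(d+1)) * ρ ≤ F n R (m-(d+1)) * g (m-(d+1)) :=
              mul_le_mul_of_nonneg_left h1 (F_nonneg n R hR0 hR1 _)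
          _ = F n R (m-(d+1)+1) := by rw [mul_comm]; exact h2
          _ = F n R (m-d) := by rw [h3]
      calc F n R (m-(d+1)) * ρ^(d+1) = (F n R (m-(d+1)) * ρ) * ρ^d := by ring
        _ ≤ F n R (m-d) * ρ^d := mul_le_mul_of_nonneg_right hkey (pow_nonneg hρ0.le d)
        _ ≤ F n R m := ih hd'
  -- geometric sum bounds
  set r : ℝ := ρ⁻¹ with hr
  have hr0 : 0 < r := inv_pos.mpr hρ0
  have hr1 : r < 1 := inv_lt_one_of_one_lt₀ hρ1
  have hρm1 : 0 < ρ - 1 := by linarith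
  have hS1 : ∑ j ∈ range m, F n R j ≤ F n R m / (ρ - 1) := by
    have hrefl : ∑ j ∈ range m, F n R j = ∑ d ∈ range m, F n R (m - 1 - d) :=
      (Finset.sum_range_reflect (fun j => F n R j) m).symm
    have hterm : ∀ d ∈ range m, F n R (m-1-d) ≤ F n R m * r^(d+1) := by
      intro d hd
      have hdm : d < m := Finset.mem_range.mp hd
      have h1 : m - 1 - d = m - (d+1) := by omega
      have h2 := hFdown (d+1) (by omega)
      have hp : (0:ℝ) < ρ^(d+1) := pow_pos hρ0 _
      rw [h1]
      have h3 : F n R (m-(d+1)) ≤ F n R m / ρ^(d+1) := (le_div_iff₀ hp).mpr h2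
      rw [div_eq_mul_inv, ← inv_pow] at h3
      exact h3
    have hgeo : ∑ d ∈ range m, r^(d+1) ≤ 1/(ρ-1) := by
      have hmul : (∑ d ∈ range m, r^d) * (r - 1) = r^m - 1 := geom_sum_mul r m
      have hsum_le : ∑ d ∈ range m, r^d ≤ 1/(1-r) := by
        have h1r : 0 < 1 - r := by linarith
        rw [le_div_iff₀ h1r]
        have hrm : 0 ≤ r^m := pow_nonneg hr0.le m
        nlinarith
      have heq : ∑ d ∈ range m, r^(d+1) = r * ∑ d ∈ range m, r^d := by
        rw [Finset.mul_sum]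
        apply Finset.sum_congr rfl
        intro d _
        rw [pow_succ]
        ring
      rw [heq]
      have h2 : r * ∑ d ∈ range m, r^d ≤ r * (1/(1-r)) :=
        mul_le_mul_of_nonneg_left hsum_le hr0.le
      have h3 : r * (1/(1-r)) = 1/(ρ-1) := by
        rw [hr]
        field_simp
      linarith
    calc ∑ j ∈ range m, F n R j = ∑ d ∈ range m, F n R (m-1-d) := hrefl
      _ ≤ ∑ d ∈ range m, F n R m * r^(d+1) := Finset.sum_le_sum hterm
      _ = F n R m * ∑ d ∈ range m, r^(d+1) := by rw [Finset.mul_sum]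
      _ ≤ F n R m * (1/(ρ-1)) := mul_le_mul_of_nonneg_left hgeo (F_nonneg n R hR0 hR1 m)
      _ = F n R m / (ρ-1) := by ring
  have hS2 : ∑ l ∈ range i, F n R (m+l) ≤ F n R m * ((ρ^i - 1)/(ρ-1)) := by
    calc ∑ l ∈ range i, F n R (m+l) ≤ ∑ l ∈ range i, F n R m * ρ^l :=
          Finset.sum_le_sum fun l _ => hFup l
      _ = F n R m * ∑ l ∈ range i, ρ^l := by rw [Finset.mul_sum]
      _ = F n R m * ((ρ^i - 1)/(ρ-1)) := by rw [geom_sum_eq (ne_of_gt hρ1) i]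
  have htotal : ∑ j ∈ range (m+i), F n R j ≤ Real.exp 1 * i * F n R m := by
    have hsplit : ∑ j ∈ range (m+i), F n R j
        = (∑ j ∈ range m, F n R j) + ∑ l ∈ range i, F n R (m+l) :=
      Finset.sum_range_add (fun j => F n R j) m i
    have hC : F n R m / (ρ-1) + F n R m * ((ρ^i - 1)/(ρ-1)) = F n R m * ρ^i/(ρ-1) := by
      field_simp
      ring
    have hD : F n R m * ρ^i/(ρ-1) ≤ Real.exp 1 * i * F n R m := by
      have h1 : F n R m * ρ^i ≤ F n R m * (Real.exp 1 * i * (ρ-1)) :=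
        mul_le_mul_of_nonneg_left hie (F_nonneg n R hR0 hR1 m)
      rw [div_le_iff₀ hρm1]
      calc F n R m * ρ^i ≤ F n R m * (Real.exp 1 * i * (ρ-1)) := h1
        _ = Real.exp 1 * i * F n R m * (ρ-1) := by ring
    calc ∑ j ∈ range (m+i), F n R j
        = (∑ j ∈ range m, F n R j) + ∑ l ∈ range i, F n R (m+l) := hsplit
      _ ≤ F n R m / (ρ-1) + F n R m * ((ρ^i - 1)/(ρ-1)) := add_le_add hS1 hS2
      _ = F n R m * ρ^i/(ρ-1) := hC
      _ ≤ Real.exp 1 * i * F n R m := hD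
  -- Markov's inequality with threshold h := m + i
  set hh : ℝ := ((m + i : ℕ) : ℝ) with hhh
  have hhm : hh = (m:ℝ) + i := by rw [hhh]; push_cast; ring
  have hε : (i:ℝ) ≤ hh - (n:ℝ)*t := by rw [hhm]; linarith
  have hε0 : 0 < hh - (n:ℝ)*t := by linarith
  have hfint : Integrable (fun ω => max (hh - ∑ i, X i ω) 0) μ := by
    apply Integrable.mono' (integrable_const |hh|)
    · apply Measurable.aestronglyMeasurable
      apply Measurable.max _ measurable_const
      apply Measurable.sub measurable_const
      exact Finset.measurable_sum _ fun i _ => hmeas i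
    · apply ae_of_all
      intro ω
      have hsum : 0 ≤ ∑ i, X i ω := Finset.sum_nonneg fun i _ => (hbound i ω).1
      rw [Real.norm_eq_abs, abs_of_nonneg (le_max_right _ _)]
      apply max_le
      · have := le_abs_self hh
        linarith
      · exact abs_nonneg hh
  have hMarkov := mul_meas_ge_le_integral_of_nonneg
      (ae_of_all μ fun ω => le_max_right (hh - ∑ i, X i ω) 0) hfint (hh - (n:ℝ)*t)
  have hsubset : {ω | (∑ i, X i ω)/n ≤ t}
      ⊆ {ω | hh - (n:ℝ)*t ≤ max (hh - ∑ i, X i ω) 0} := by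
    intro ω hω
    simp only [Set.mem_setOf_eq] at hω ⊢
    have hsle : ∑ i, X i ω ≤ (n:ℝ)*t := by
      rw [div_le_iff₀ hn0] at hω
      linarith [hω]
    calc hh - (n:ℝ)*t ≤ hh - ∑ i, X i ω := by linarith
      _ ≤ max (hh - ∑ i, X i ω) 0 := le_max_left _ _
  have hμle : (μ {ω | (∑ i, X i ω)/n ≤ t}).toReal
      ≤ (μ {ω | hh - (n:ℝ)*t ≤ max (hh - ∑ i, X i ω) 0}).toReal :=
    ENNReal.toReal_mono (measure_ne_top μ _) (measure_mono hsubset)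
  -- convex domination
  have hcd := convex_dominate μ n X hmeas hindep hbound R hR0 hR1 hmean hh
  -- evaluate the binomial expectation of (hh - k)+ as a sum of CDF values
  have hcount : ∀ (c k : ℕ), max ((c:ℝ) - k) 0 = ∑ j ∈ range c, (if k ≤ j then (1:ℝ) else 0) := by
    intro c k
    induction c with
    | zero =>
      rw [Finset.sum_range_zero]
      apply max_eq_right
      simp
    | succ c ih =>
      rw [Finset.sum_range_succ, ← ih]
      rcases le_or_gt k c with hkc | hkc
      · rw [if_pos hkc]
        have hkc' : (k:ℝ) ≤ c := by exact_mod_cast hkc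
        have h1 : max ((c:ℝ) - k) 0 = (c:ℝ) - k := max_eq_left (by linarith)
        have h3 : max (((c+1:ℕ):ℝ) - k) 0 = ((c+1:ℕ):ℝ) - k := by
          apply max_eq_left
          push_cast
          linarith
        rw [h1, h3]
        push_cast
        ring
      · rw [if_neg (by omega)]
        have hkc' : (c:ℝ) < k := by exact_mod_cast hkc
        have hkc'' : ((c+1:ℕ):ℝ) ≤ k := by
          push_cast
          have : (c:ℤ) < k := by exact_mod_cast hkc
          have : c + 1 ≤ k := by omega
          exact_mod_cast this
        have h1 : max ((c:ℝ) - k) 0 = 0 := max_eq_right (by linarith)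
        have h3 : max (((c+1:ℕ):ℝ) - k) 0 = 0 := max_eq_right (by linarith)
        rw [h1, h3]
        ring
  have hFform : ∀ j : ℕ, ∑ k ∈ range (n+1), (if k ≤ j then b n R k else 0) = F n R j := by
    intro j
    rw [← Finset.sum_filter]
    have hfil : (range (n+1)).filter (fun k => k ≤ j) = (range (j+1)).filter (fun k => k ≤ n) := by
      ext k
      simp only [Finset.mem_filter, Finset.mem_range]
      omega
    rw [hfil, Finset.sum_filter]
    rfl
  have hswap : ∑ j ∈ range (n+1), (n.choose j : ℝ) * R^j * (1-R)^(n-j) * max (hh - j) 0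
      = ∑ j ∈ range (m+i), F n R j := by
    calc ∑ k ∈ range (n+1), (n.choose k : ℝ) * R^k * (1-R)^(n-k) * max (hh - k) 0
        = ∑ k ∈ range (n+1), ∑ j ∈ range (m+i), (if k ≤ j then b n R k else 0) := by
          apply Finset.sum_congr rfl
          intro k _
          rw [hhh, hcount (m+i) k, Finset.mul_sum]
          apply Finset.sum_congr rfl
          intro j _
          rw [b]
          split <;> simp
      _ = ∑ j ∈ range (m+i), ∑ k ∈ range (n+1), (if k ≤ j then b n R k else 0) :=
          Finset.sum_comm
      _ = ∑ j ∈ range (m+i), F n R j := by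
          apply Finset.sum_congr rfl
          intro j _
          exact hFform j
  -- final chain
  have hchain : (hh - (n:ℝ)*t) * (μ {ω | (∑ i, X i ω)/n ≤ t}).toReal
      ≤ Real.exp 1 * i * F n R m := by
    calc (hh - (n:ℝ)*t) * (μ {ω | (∑ i, X i ω)/n ≤ t}).toReal
        ≤ (hh - (n:ℝ)*t) * (μ {ω | hh - (n:ℝ)*t ≤ max (hh - ∑ i, X i ω) 0}).toReal :=
          mul_le_mul_of_nonneg_left hμle hε0.le
      _ ≤ ∫ ω, max (hh - ∑ i, X i ω) 0 ∂μ := hMarkov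
      _ ≤ ∑ j ∈ range (n+1), (n.choose j : ℝ) * R^j * (1-R)^(n-j) * max (hh - j) 0 := hcd
      _ = ∑ j ∈ range (m+i), F n R j := hswap
      _ ≤ Real.exp 1 * i * F n R m := htotal
  have hfinal : (i:ℝ) * (μ {ω | (∑ i, X i ω)/n ≤ t}).toReal
      ≤ (i:ℝ) * (Real.exp 1 * F n R m) := by
    calc (i:ℝ) * (μ {ω | (∑ i, X i ω)/n ≤ t}).toReal
        ≤ (hh - (n:ℝ)*t) * (μ {ω | (∑ i, X i ω)/n ≤ t}).toReal :=
          mul_le_mul_of_nonneg_right hε hLHSnn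
      _ ≤ Real.exp 1 * i * F n R m := hchain
      _ = (i:ℝ) * (Real.exp 1 * F n R m) := by ring
  exact le_of_mul_le_mul_left hfinal hi0
end
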